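/- With the extended data p̄, q̄, M̄, Ḡ for the partial keypoint-guided problem, for every π̄ ∈ Π(p̄,q̄;M̄) the objective decomposes as ⟨M̄⊙π̄, Ḡ⟩_F = Σ_{i=1}^m Σ_{j=1}^n M_{i,j} π̄_{i,j} G_{i,j} + ξ(‖p‖₁ + ‖q‖₁ − 2s) + A·π̄_{m+1,n+1}, where ⟨·,·⟩_F is the Frobenius inner product. -/
import Mathlib


open Finset

noncomputable section

variable {m n : ℕ}

/-- Mask matrix determined by the keypoint pair set `K`:
`M i j = 1` if `(i,j) ∈ K`; `M i j = 0` if `i ∈ I` or `j ∈ J` but `(i,j) ∉ K`;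
`M i j = 1` otherwise. -/
def mask (K : Finset (Fin m × Fin n)) : Matrix (Fin m) (Fin n) ℝ :=
  fun i j =>
    if (i, j) ∈ K then 1
    else if (∃ j', (i, j') ∈ K) ∨ (∃ i', (i', j) ∈ K) then 0
    else 1

/-- The masked feasible set `Π(p, q; M)`. -/
def PiM (M : Matrix (Fin m) (Fin n) ℝ) (p : Fin m → ℝ) (q : Fin n → ℝ) :
    Set (Matrix (Fin m) (Fin n) ℝ) :=
  {π | (∀ i j, 0 ≤ π i j) ∧ (∀ i, ∑ j, M i j * π i j = p i) ∧
    (∀ j, ∑ i, M i j * π i j = q j)}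

/-- Extend an `m × n` matrix by one extra column, one extra row and a corner entry. -/
def extend (B : Matrix (Fin m) (Fin n) ℝ) (col : Fin m → ℝ) (row : Fin n → ℝ)
    (corner : ℝ) : Matrix (Fin (m + 1)) (Fin (n + 1)) ℝ :=
  fun i j =>
    if hi : (i : ℕ) < m then
      if hj : (j : ℕ) < n then B ⟨i, hi⟩ ⟨j, hj⟩ else col ⟨i, hi⟩
    else if hj : (j : ℕ) < n then row ⟨j, hj⟩ else corner

/-- Extend a vector by one extra entry. -/
def extVec (v : Fin m → ℝ) (last : ℝ) : Fin (m + 1) → ℝ :=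
  fun i => if hi : (i : ℕ) < m then v ⟨i, hi⟩ else last

/-- `a i = 0` if `i ∈ I` and `1` otherwise. -/
def avec (K : Finset (Fin m × Fin n)) : Fin m → ℝ :=
  fun i => if ∃ j, (i, j) ∈ K then 0 else 1

/-- `b j = 0` if `j ∈ J` and `1` otherwise. -/
def bvec (K : Finset (Fin m × Fin n)) : Fin n → ℝ :=
  fun j => if ∃ i, (i, j) ∈ K then 0 else 1

/-- The extended mask `M̄`. -/
def Mbar (K : Finset (Fin m × Fin n)) : Matrix (Fin (m + 1)) (Fin (n + 1)) ℝ :=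
  extend (mask K) (avec K) (bvec K) 1

/-- The extended guiding matrix `Ḡ`. -/
def Gbar (G : Matrix (Fin m) (Fin n) ℝ) (ξ A : ℝ) :
    Matrix (Fin (m + 1)) (Fin (n + 1)) ℝ :=
  extend G (fun _ => ξ) (fun _ => ξ) (2 * ξ + A)

/-- The extended source weights `p̄ = (pᵀ, ‖q‖₁ − s)ᵀ`. -/
def pbar (p : Fin m → ℝ) (q : Fin n → ℝ) (s : ℝ) : Fin (m + 1) → ℝ :=
  extVec p (∑ j, q j - s)

/-- The extended target weights `q̄ = (qᵀ, ‖p‖₁ − s)ᵀ`. -/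
def qbar (p : Fin m → ℝ) (q : Fin n → ℝ) (s : ℝ) : Fin (n + 1) → ℝ :=
  extVec q (∑ i, p i - s)

/-- for every `π̄ ∈ Π(p̄, q̄; M̄)`, the Frobenius objective
`⟨M̄ ⊙ π̄, Ḡ⟩_F` decomposes as the cost of the upper-left block plus
`ξ(‖p‖₁ + ‖q‖₁ − 2s)` plus `A` times the dummy-to-dummy mass. -/
theorem extended_objective_decomposition
    (p : Fin m → ℝ) (q : Fin n → ℝ) (K : Finset (Fin m × Fin n)) (s : ℝ)
    (G : Matrix (Fin m) (Fin n) ℝ) (ξ A : ℝ)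
    (hp : ∀ i, 0 ≤ p i) (hq : ∀ j, 0 ≤ q j)
    (hK1 : ∀ a ∈ K, ∀ b ∈ K, a.1 = b.1 → a = b)
    (hK2 : ∀ a ∈ K, ∀ b ∈ K, a.2 = b.2 → a = b)
    (hs0 : 0 ≤ s) (hs : s ≤ min (∑ i, p i) (∑ j, q j))
    (πb : Matrix (Fin (m + 1)) (Fin (n + 1)) ℝ)
    (hπb : πb ∈ PiM (Mbar K) (pbar p q s) (qbar p q s)) :
    ∑ i, ∑ j, Mbar K i j * πb i j * Gbar G ξ A i j
      = (∑ i : Fin m, ∑ j : Fin n, mask K i j * πb i.castSucc j.castSucc * G i j)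
        + ξ * ((∑ i, p i) + (∑ j, q j) - 2 * s)
        + A * πb (Fin.last m) (Fin.last n) := by
  obtain ⟨hpos, hrow, hcol⟩ := hπb
  have hcc : ∀ (i : Fin m) (j : Fin n),
      Mbar K i.castSucc j.castSucc = mask K i j ∧
      Gbar G ξ A i.castSucc j.castSucc = G i j := by
    intro i j
    constructor <;> simp [Mbar, Gbar, extend, i.isLt, j.isLt]
  have hcl : ∀ (i : Fin m),
      Mbar K i.castSucc (Fin.last n) = avec K i ∧
      Gbar G ξ A i.castSucc (Fin.last n) = ξ := by
    intro i
    constructor <;> simp [Mbar, Gbar, extend, i.isLt]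
  have hlc : ∀ (j : Fin n),
      Mbar K (Fin.last m) j.castSucc = bvec K j ∧
      Gbar G ξ A (Fin.last m) j.castSucc = ξ := by
    intro j
    constructor <;> simp [Mbar, Gbar, extend, j.isLt]
  have hll : Mbar K (Fin.last m) (Fin.last n) = 1 ∧
      Gbar G ξ A (Fin.last m) (Fin.last n) = 2 * ξ + A := by
    constructor <;> simp [Mbar, Gbar, extend]
  -- last column constraint
  have hcolL := hcol (Fin.last n)
  rw [Fin.sum_univ_castSucc] at hcolL
  simp only [(hcl _).1, (hll).1, one_mul] at hcolL
  have hqL : qbar p q s (Fin.last n) = (∑ i, p i) - s := by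
    simp [qbar, extVec]
  rw [hqL] at hcolL
  -- last row constraint
  have hrowL := hrow (Fin.last m)
  rw [Fin.sum_univ_castSucc] at hrowL
  simp only [(hlc _).1, (hll).1, one_mul] at hrowL
  have hpL : pbar p q s (Fin.last m) = (∑ j, q j) - s := by
    simp [pbar, extVec]
  rw [hpL] at hrowL
  -- expand the LHS
  rw [Fin.sum_univ_castSucc]
  have h1 : ∀ i : Fin m,
      (∑ j : Fin (n+1), Mbar K i.castSucc j * πb i.castSucc j * Gbar G ξ A i.castSucc j)
      = (∑ j : Fin n, mask K i j * πb i.castSucc j.castSucc * G i j)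
        + avec K i * πb i.castSucc (Fin.last n) * ξ := by
    intro i
    rw [Fin.sum_univ_castSucc]
    simp only [(hcc i _).1, (hcc i _).2, (hcl i).1, (hcl i).2]
  have h2 : (∑ j : Fin (n+1), Mbar K (Fin.last m) j * πb (Fin.last m) j *
      Gbar G ξ A (Fin.last m) j)
      = (∑ j : Fin n, bvec K j * πb (Fin.last m) j.castSucc * ξ)
        + πb (Fin.last m) (Fin.last n) * (2 * ξ + A) := by
    rw [Fin.sum_univ_castSucc]
    simp only [(hlc _).1, (hlc _).2, hll.1, hll.2, one_mul]
  rw [h2]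
  simp only [h1]
  rw [Finset.sum_add_distrib]
  have e1 : (∑ i : Fin m, avec K i * πb i.castSucc (Fin.last n) * ξ)
      = ((∑ i, p i) - s - πb (Fin.last m) (Fin.last n)) * ξ := by
    rw [← Finset.sum_mul]
    congr 1
    linarith
  have e2 : (∑ j : Fin n, bvec K j * πb (Fin.last m) j.castSucc * ξ)
      = ((∑ j, q j) - s - πb (Fin.last m) (Fin.last n)) * ξ := by
    rw [← Finset.sum_mul]
    congr 1
    linarith
  rw [e1, e2]
  ring
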